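/- For all reals a > 0 and λ > 0: ∫₀^∞ (a/√(2πt³)) · exp(−a²/(2t)) · exp(−λt) dt = exp(−a√(2λ)). -/

import Mathlib

open MeasureTheory Real Set

private theorem levy_lintegral_cov {s : Set ℝ} {f : ℝ → ℝ} {f' : ℝ → ℝ}
    (hs : MeasurableSet s) (hf' : ∀ x ∈ s, HasDerivWithinAt f (f' x) s x)
    (hf : Set.InjOn f s) (g : ℝ → ENNReal) :
    ∫⁻ x in f '' s, g x = ∫⁻ x in s, ENNReal.ofReal |f' x| * g (f x) := by
  simpa only [ContinuousLinearMap.det_toSpanSingleton] using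
    lintegral_image_eq_lintegral_abs_det_fderiv_mul volume hs
      (fun x hx => (hf' x hx).hasFDerivWithinAt) hf g

private theorem levy_gauss_lintegral :
    ∫⁻ x : ℝ, ENNReal.ofReal (Real.exp (-x ^ 2)) = ENNReal.ofReal (Real.sqrt π) := by
  rw [← MeasureTheory.ofReal_integral_eq_lintegral_ofReal]
  · congr 1
    simpa using integral_gaussian 1
  · simpa using integrable_exp_neg_mul_sq (one_pos)
  · exact ae_of_all _ fun x => (Real.exp_pos _).le

set_option maxHeartbeats 1000000 in
/-- Lévy's formula: for `a, λ > 0`,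
`∫₀^∞ (a/√(2πt³)) e^{−a²/(2t)} e^{−λt} dt = e^{−a√(2λ)}`. -/
theorem levy_laplace_transform (a lam : ℝ) (ha : 0 < a) (hlam : 0 < lam) :
    ∫ t in Set.Ioi (0 : ℝ),
        (a / Real.sqrt (2 * Real.pi * t ^ 3)) * Real.exp (-a ^ 2 / (2 * t)) *
          Real.exp (-lam * t)
      = Real.exp (-a * Real.sqrt (2 * lam)) := by
  set sl := Real.sqrt lam with hsl_def
  set c := a / Real.sqrt 2 with hc_def
  have h2 : (0:ℝ) < Real.sqrt 2 := Real.sqrt_pos.2 two_pos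
  have h2sq : (Real.sqrt 2) ^ 2 = 2 := Real.sq_sqrt two_pos.le
  have hsl0 : 0 < sl := Real.sqrt_pos.2 hlam
  have hslsq : sl ^ 2 = lam := Real.sq_sqrt hlam.le
  have hc0 : 0 < c := div_pos ha h2
  have hpi : (0:ℝ) < Real.sqrt π := Real.sqrt_pos.2 pi_pos
  have hpisq : (Real.sqrt π) ^ 2 = π := Real.sq_sqrt pi_pos.le
  have hca : c * Real.sqrt 2 = a := by rw [hc_def]; field_simp
  have h2l : Real.sqrt (2 * lam) = Real.sqrt 2 * sl := Real.sqrt_mul (by norm_num) lam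
  clear_value sl c
  -- the substitution function G and its derivative
  set G : ℝ → ℝ := fun t => sl * Real.sqrt t - c / Real.sqrt t with hG_def
  set G' : ℝ → ℝ := fun t => sl / (2 * Real.sqrt t) + c / (2 * (t * Real.sqrt t)) with hG'_def
  have hGderiv : ∀ t ∈ Ioi (0:ℝ), HasDerivAt G (G' t) t := by
    intro t ht
    have ht0 : (0:ℝ) < t := ht
    have hst0 : 0 < Real.sqrt t := Real.sqrt_pos.2 ht0
    have hst : Real.sqrt t ≠ 0 := ne_of_gt hst0
    have h1 : HasDerivAt Real.sqrt (1 / (2 * Real.sqrt t)) t :=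
      Real.hasDerivAt_sqrt (ne_of_gt ht0)
    have hGd : HasDerivAt G
        (sl * (1 / (2 * Real.sqrt t)) - c * (-(1 / (2 * Real.sqrt t)) / (Real.sqrt t) ^ 2)) t := by
      simp only [hG_def, div_eq_mul_inv]
      exact (h1.const_mul sl).sub ((h1.inv hst).const_mul c)
    convert hGd using 1
    have hut : t = Real.sqrt t ^ 2 := (Real.sq_sqrt ht0.le).symm
    simp only [hG'_def]
    rw [hut]
    set u := Real.sqrt t
    field_simp
    rw [Real.sqrt_sq hst0.le]
    ring
  have hG'pos : ∀ t ∈ Ioi (0:ℝ), 0 < G' t := by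
    intro t ht
    have ht0 : (0:ℝ) < t := ht
    have : 0 < Real.sqrt t := Real.sqrt_pos.2 ht0
    positivity
  -- G is strictly monotone on Ioi 0
  have hGmono : StrictMonoOn G (Ioi (0:ℝ)) := by
    intro t1 h1 t2 h2' h12
    have hs1 : 0 < Real.sqrt t1 := Real.sqrt_pos.2 h1
    have hs2 : 0 < Real.sqrt t2 := Real.sqrt_pos.2 h2'
    have hlt : Real.sqrt t1 < Real.sqrt t2 := Real.sqrt_lt_sqrt (le_of_lt h1) h12
    have e1 : sl * Real.sqrt t1 < sl * Real.sqrt t2 := by nlinarith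
    have e2 : c / Real.sqrt t2 < c / Real.sqrt t1 :=
      div_lt_div_of_pos_left hc0 hs1 hlt
    simp only [hG_def]
    linarith
  -- G maps Ioi 0 onto ℝ
  have hGsurj : G '' Ioi (0:ℝ) = univ := by
    apply eq_univ_of_forall
    intro y
    set D := Real.sqrt (y ^ 2 + 4 * sl * c) with hD_def
    have hD2 : D ^ 2 = y ^ 2 + 4 * sl * c := Real.sq_sqrt (by positivity)
    have hDy : -y < D := by
      nlinarith [Real.sqrt_nonneg (y ^ 2 + 4 * sl * c), mul_pos hsl0 hc0, sq_nonneg (D + y)]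
    set s := (y + D) / (2 * sl) with hs_def
    have hs0 : 0 < s := div_pos (by linarith) (by linarith)
    have hs' : s ≠ 0 := ne_of_gt hs0
    refine ⟨s ^ 2, mem_Ioi.2 (by positivity), ?_⟩
    have hss : Real.sqrt (s ^ 2) = s := Real.sqrt_sq hs0.le
    have hT : 2 * sl * s = y + D := by rw [hs_def]; field_simp
    have key' : 4 * sl * (sl * s ^ 2 - c - y * s) = 0 := by
      linear_combination (2 * sl * s + D - y) * hT + hD2
    have key : sl * s ^ 2 - c = y * s := by
      rcases mul_eq_zero.mp key' with h | h
      · nlinarith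
      · linarith
    show sl * Real.sqrt (s ^ 2) - c / Real.sqrt (s ^ 2) = y
    rw [hss]
    field_simp
    linear_combination key
  -- the involution-type map f
  set k := c ^ 2 / lam with hk_def
  have hk0 : 0 < k := by positivity
  have hsqrtk : Real.sqrt k = c / sl := by
    rw [hk_def, show c ^ 2 / lam = (c / sl) ^ 2 by rw [← hslsq]; ring,
      Real.sqrt_sq (by positivity)]
  set f : ℝ → ℝ := fun t => k / t with hf_def
  have hfderiv : ∀ t ∈ Ioi (0:ℝ), HasDerivAt f (-(k / t ^ 2)) t := by
    intro t ht
    have ht0 : (0:ℝ) < t := ht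
    have h1 : HasDerivAt (fun t : ℝ => k * t⁻¹) (k * -((t ^ 2)⁻¹)) t :=
      (hasDerivAt_inv (ne_of_gt ht0)).const_mul k
    have : HasDerivAt f (k * -((t ^ 2)⁻¹)) t := by
      simp only [hf_def, div_eq_mul_inv]; exact h1
    convert this using 1
    field_simp
  have hfinj : Set.InjOn f (Ioi (0:ℝ)) := by
    intro t1 h1 t2 h2' h
    have ht1 : (0:ℝ) < t1 := h1
    have ht2 : (0:ℝ) < t2 := h2'
    have h' : k * t2 = k * t1 := by
      have := (div_eq_div_iff (ne_of_gt ht1) (ne_of_gt ht2)).mp h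
      linarith
    have := mul_left_cancel₀ (ne_of_gt hk0) h'
    linarith
  have hfim : f '' Ioi (0:ℝ) = Ioi (0:ℝ) := by
    ext y
    constructor
    · rintro ⟨t, ht, rfl⟩
      have ht0 : (0:ℝ) < t := ht
      exact mem_Ioi.2 (by positivity)
    · intro hy
      have hy0 : (0:ℝ) < y := hy
      exact ⟨k / y, mem_Ioi.2 (by positivity), by show k / (k / y) = y; field_simp⟩
  -- the two densities
  set H1 : ℝ → ℝ := fun t => c / (Real.sqrt π * (t * Real.sqrt t)) * Real.exp (-(G t) ^ 2)
    with hH1_def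
  set H2 : ℝ → ℝ := fun t => sl / (Real.sqrt π * Real.sqrt t) * Real.exp (-(G t) ^ 2)
    with hH2_def
  -- pointwise identity along f
  have P1 : ∀ t ∈ Ioi (0:ℝ), |(-(k / t ^ 2))| * H1 (f t) = H2 t := by
    intro t ht
    have ht0 : (0:ℝ) < t := ht
    obtain ⟨u, hu0, rfl⟩ : ∃ u : ℝ, 0 < u ∧ u ^ 2 = t :=
      ⟨Real.sqrt t, Real.sqrt_pos.2 ht0, Real.sq_sqrt ht0.le⟩
    have hsu : Real.sqrt (u ^ 2) = u := Real.sqrt_sq hu0.le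
    have hm : Real.sqrt (k / u ^ 2) = c / sl / u := by
      rw [Real.sqrt_div hk0.le, hsqrtk, hsu]
    have habs : |(-(k / (u ^ 2) ^ 2))| = k / (u ^ 2) ^ 2 := by
      rw [abs_neg, abs_of_pos (by positivity)]
    have hGf : G (f (u ^ 2)) = -(G (u ^ 2)) := by
      show sl * Real.sqrt (k / u ^ 2) - c / Real.sqrt (k / u ^ 2)
          = -(sl * Real.sqrt (u ^ 2) - c / Real.sqrt (u ^ 2))
      rw [hm, hsu]
      field_simp
      ring
    show |(-(k / (u ^ 2) ^ 2))| *
        (c / (Real.sqrt π * (k / u ^ 2 * Real.sqrt (k / u ^ 2))) * Real.exp (-(G (f (u ^ 2))) ^ 2))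
      = sl / (Real.sqrt π * Real.sqrt (u ^ 2)) * Real.exp (-(G (u ^ 2)) ^ 2)
    rw [habs, hGf, neg_sq, hm, hsu, hk_def, ← hslsq]
    generalize Real.exp (-(G (u ^ 2)) ^ 2) = E
    field_simp
  -- pointwise identity along G
  have P2 : ∀ t ∈ Ioi (0:ℝ), |G' t| * (2 / Real.sqrt π * Real.exp (-(G t) ^ 2))
      = H1 t + H2 t := by
    intro t ht
    have ht0 : (0:ℝ) < t := ht
    obtain ⟨u, hu0, rfl⟩ : ∃ u : ℝ, 0 < u ∧ u ^ 2 = t :=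
      ⟨Real.sqrt t, Real.sqrt_pos.2 ht0, Real.sq_sqrt ht0.le⟩
    have hsu : Real.sqrt (u ^ 2) = u := Real.sqrt_sq hu0.le
    have habs : |G' (u ^ 2)| = G' (u ^ 2) := abs_of_pos (hG'pos _ (mem_Ioi.2 (by positivity)))
    rw [habs]
    show (sl / (2 * Real.sqrt (u ^ 2)) + c / (2 * (u ^ 2 * Real.sqrt (u ^ 2)))) *
        (2 / Real.sqrt π * Real.exp (-(G (u ^ 2)) ^ 2))
      = c / (Real.sqrt π * (u ^ 2 * Real.sqrt (u ^ 2))) * Real.exp (-(G (u ^ 2)) ^ 2)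
        + sl / (Real.sqrt π * Real.sqrt (u ^ 2)) * Real.exp (-(G (u ^ 2)) ^ 2)
    rw [hsu]
    generalize Real.exp (-(G (u ^ 2)) ^ 2) = E
    field_simp
    ring
  -- pointwise identity for the original integrand
  have P0 : ∀ t ∈ Ioi (0:ℝ),
      (a / Real.sqrt (2 * Real.pi * t ^ 3)) * Real.exp (-a ^ 2 / (2 * t)) * Real.exp (-lam * t)
      = Real.exp (-a * Real.sqrt (2 * lam)) * H1 t := by
    intro t ht
    have ht0 : (0:ℝ) < t := ht
    obtain ⟨u, hu0, rfl⟩ : ∃ u : ℝ, 0 < u ∧ u ^ 2 = t :=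
      ⟨Real.sqrt t, Real.sqrt_pos.2 ht0, Real.sq_sqrt ht0.le⟩
    have hsu : Real.sqrt (u ^ 2) = u := Real.sqrt_sq hu0.le
    have e1 : Real.sqrt (2 * π * (u ^ 2) ^ 3) = Real.sqrt 2 * Real.sqrt π * u ^ 3 := by
      rw [show 2 * π * (u ^ 2) ^ 3 = (Real.sqrt 2 * Real.sqrt π * u ^ 3) ^ 2 by
        rw [mul_pow, mul_pow, h2sq, hpisq]; ring]
      exact Real.sqrt_sq (by positivity)
    have e2 : -a ^ 2 / (2 * u ^ 2) + -lam * u ^ 2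
        = -(G (u ^ 2)) ^ 2 + -a * Real.sqrt (2 * lam) := by
      show -a ^ 2 / (2 * u ^ 2) + -lam * u ^ 2
          = -(sl * Real.sqrt (u ^ 2) - c / Real.sqrt (u ^ 2)) ^ 2 + -a * Real.sqrt (2 * lam)
      rw [hsu, h2l, ← hca, ← hslsq]
      field_simp
      linear_combination (2 * c * sl * u ^ 2 - c ^ 2) * h2sq
    have ecoef : a / (Real.sqrt 2 * Real.sqrt π * u ^ 3)
        = c / (Real.sqrt π * (u ^ 2 * u)) := by
      rw [← hca]; field_simp
    show a / Real.sqrt (2 * π * (u ^ 2) ^ 3) * Real.exp (-a ^ 2 / (2 * u ^ 2)) *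
        Real.exp (-lam * u ^ 2)
      = Real.exp (-a * Real.sqrt (2 * lam)) *
        (c / (Real.sqrt π * (u ^ 2 * Real.sqrt (u ^ 2))) * Real.exp (-(G (u ^ 2)) ^ 2))
    rw [e1, hsu, ecoef, mul_assoc, ← Real.exp_add, e2, Real.exp_add]
    ring
  -- measurability
  have msqrt : Measurable Real.sqrt := Real.continuous_sqrt.measurable
  have hGm : Measurable G := by
    rw [hG_def]
    exact (msqrt.const_mul sl).sub (measurable_const.div msqrt)
  have hEm : Measurable fun t => Real.exp (-(G t) ^ 2) :=
    Real.measurable_exp.comp ((hGm.pow_const 2).neg)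
  have hH1m : Measurable H1 := by
    rw [hH1_def]
    exact (measurable_const.div ((measurable_id.mul msqrt).const_mul (Real.sqrt π))).mul hEm
  -- the key lintegral
  have hIJ : (∫⁻ t in Ioi (0:ℝ), ENNReal.ofReal (H1 t))
      = ∫⁻ t in Ioi (0:ℝ), ENNReal.ofReal (H2 t) := by
    have cov := levy_lintegral_cov (f := f) (f' := fun t => -(k / t ^ 2)) measurableSet_Ioi
      (fun t ht => (hfderiv t ht).hasDerivWithinAt) hfinj (fun x => ENNReal.ofReal (H1 x))
    rw [hfim] at cov
    rw [cov]
    apply setLIntegral_congr_fun measurableSet_Ioi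
    intro t ht
    beta_reduce
    rw [← ENNReal.ofReal_mul (abs_nonneg _), P1 t ht]
  have hsum : (∫⁻ t in Ioi (0:ℝ), ENNReal.ofReal (H1 t))
      + (∫⁻ t in Ioi (0:ℝ), ENNReal.ofReal (H2 t)) = 2 := by
    have cov := levy_lintegral_cov (f := G) (f' := G') measurableSet_Ioi
      (fun t ht => (hGderiv t ht).hasDerivWithinAt) hGmono.injOn
      (fun x => ENNReal.ofReal (2 / Real.sqrt π * Real.exp (-x ^ 2)))
    rw [hGsurj, Measure.restrict_univ] at cov
    have lhs : (∫⁻ x : ℝ, ENNReal.ofReal (2 / Real.sqrt π * Real.exp (-x ^ 2))) = 2 := by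
      simp_rw [ENNReal.ofReal_mul (by positivity : (0:ℝ) ≤ 2 / Real.sqrt π)]
      rw [lintegral_const_mul' _ _ ENNReal.ofReal_ne_top, levy_gauss_lintegral,
        ← ENNReal.ofReal_mul (by positivity), div_mul_cancel₀ _ (ne_of_gt hpi)]
      norm_num
    have rhs : (∫⁻ t in Ioi (0:ℝ),
          ENNReal.ofReal |G' t| * ENNReal.ofReal (2 / Real.sqrt π * Real.exp (-(G t) ^ 2)))
        = ∫⁻ t in Ioi (0:ℝ), (ENNReal.ofReal (H1 t) + ENNReal.ofReal (H2 t)) := by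
      apply setLIntegral_congr_fun measurableSet_Ioi
      intro t ht
      have ht0 : (0:ℝ) < t := ht
      have hst0 : 0 < Real.sqrt t := Real.sqrt_pos.2 ht0
      have h1nn : 0 ≤ H1 t := by
        show 0 ≤ c / (Real.sqrt π * (t * Real.sqrt t)) * Real.exp (-(G t) ^ 2)
        positivity
      beta_reduce
      rw [← ENNReal.ofReal_mul (abs_nonneg _), P2 t ht, ENNReal.ofReal_add h1nn]
      show 0 ≤ sl / (Real.sqrt π * Real.sqrt t) * Real.exp (-(G t) ^ 2)
      positivity
    calc (∫⁻ t in Ioi (0:ℝ), ENNReal.ofReal (H1 t))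
          + (∫⁻ t in Ioi (0:ℝ), ENNReal.ofReal (H2 t))
        = ∫⁻ t in Ioi (0:ℝ), (ENNReal.ofReal (H1 t) + ENNReal.ofReal (H2 t)) :=
          (lintegral_add_left (ENNReal.measurable_ofReal.comp hH1m) _).symm
      _ = ∫⁻ t in Ioi (0:ℝ),
            ENNReal.ofReal |G' t| * ENNReal.ofReal (2 / Real.sqrt π * Real.exp (-(G t) ^ 2)) :=
          rhs.symm
      _ = ∫⁻ x : ℝ, ENNReal.ofReal (2 / Real.sqrt π * Real.exp (-x ^ 2)) := cov.symm
      _ = 2 := lhs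
  have hI1 : (∫⁻ t in Ioi (0:ℝ), ENNReal.ofReal (H1 t)) = 1 := by
    have h2I : 2 * (∫⁻ t in Ioi (0:ℝ), ENNReal.ofReal (H1 t)) = 2 * 1 := by
      rw [two_mul, mul_one]
      nth_rewrite 2 [hIJ]
      exact hsum
    exact (ENNReal.mul_right_inj two_ne_zero ENNReal.ofNat_ne_top).mp h2I
  -- final assembly
  have hFm : AEStronglyMeasurable
      (fun t => a / Real.sqrt (2 * π * t ^ 3) * Real.exp (-a ^ 2 / (2 * t)) *
        Real.exp (-lam * t)) (volume.restrict (Ioi (0:ℝ))) := by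
    refine Measurable.aestronglyMeasurable ?_
    exact ((measurable_const.div
        (msqrt.comp ((measurable_id.pow_const 3).const_mul (2 * π)))).mul
        (Real.measurable_exp.comp (measurable_const.div (measurable_id.const_mul 2)))).mul
      (Real.measurable_exp.comp (measurable_id.const_mul (-lam)))
  rw [MeasureTheory.integral_eq_lintegral_of_nonneg_ae
    (ae_of_all _ fun t => by positivity) hFm]
  have final : (∫⁻ t in Ioi (0:ℝ),
      ENNReal.ofReal (a / Real.sqrt (2 * π * t ^ 3) * Real.exp (-a ^ 2 / (2 * t)) *
        Real.exp (-lam * t)))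
      = ENNReal.ofReal (Real.exp (-a * Real.sqrt (2 * lam))) := by
    calc (∫⁻ t in Ioi (0:ℝ),
        ENNReal.ofReal (a / Real.sqrt (2 * π * t ^ 3) * Real.exp (-a ^ 2 / (2 * t)) *
          Real.exp (-lam * t)))
        = ∫⁻ t in Ioi (0:ℝ),
            ENNReal.ofReal (Real.exp (-a * Real.sqrt (2 * lam))) * ENNReal.ofReal (H1 t) := by
          apply setLIntegral_congr_fun measurableSet_Ioi
          intro t ht
          beta_reduce
          rw [P0 t ht, ENNReal.ofReal_mul (Real.exp_pos _).le]
      _ = ENNReal.ofReal (Real.exp (-a * Real.sqrt (2 * lam))) := by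
          rw [lintegral_const_mul' _ _ ENNReal.ofReal_ne_top, hI1, mul_one]
  rw [final, ENNReal.toReal_ofReal (Real.exp_pos _).le]
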